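/- Let N, a, b, r ∈ ℕ, let A, B : [N] → ℝ^{a×b}, and let P ∈ {0,1}^{N×N} be the boolean matrix defined by P(x,y) = 1 if and only if rank(A(x) + B(y)) ≥ r. Then suprank(P) ≤ 4^r. (Monotone rank problems of order k, or their negations, have support-rank at most 4^k.) -/

import Mathlib

open Matrix

/-- The support-rank of a boolean matrix: the minimum rank of a real matrix with
the same support. -/
noncomputable def suprank {I J : Type*} [Fintype J] (M : Matrix I J Bool) : ℕ :=
  sInf {r : ℕ | ∃ A : Matrix I J ℝ, A.rank = r ∧
    ∀ i j, A i j = 0 ↔ M i j = false}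

namespace Stmt10Aux

open Equiv Finset

variable {n : ℕ}

/-- transport an equivalence between complements-as-finsets to complements-as-negations -/
def cEquiv (K L : Finset (Fin n)) (v : {x // x ∈ Kᶜ} ≃ {x // x ∈ Lᶜ}) :
    {x // ¬ x ∈ K} ≃ {x // ¬ x ∈ L} :=
  ((Equiv.subtypeEquivRight (fun x => (Finset.mem_compl (s := K) (a := x)).symm)).trans v).trans
    (Equiv.subtypeEquivRight (fun x => Finset.mem_compl))

/-- glue a bijection `K ≃ L` and a bijection `Kᶜ ≃ Lᶜ` to a permutation of `Fin n`. -/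
def Phi (K L : Finset (Fin n)) (u : {x // x ∈ K} ≃ {x // x ∈ L})
    (v : {x // x ∈ Kᶜ} ≃ {x // x ∈ Lᶜ}) : Equiv.Perm (Fin n) :=
  ((Equiv.sumCompl (· ∈ K)).symm.trans (Equiv.sumCongr u (cEquiv K L v))).trans
    (Equiv.sumCompl (· ∈ L))

lemma Phi_apply_mem (K L : Finset (Fin n)) (u : {x // x ∈ K} ≃ {x // x ∈ L})
    (v : {x // x ∈ Kᶜ} ≃ {x // x ∈ Lᶜ}) {i : Fin n} (hi : i ∈ K) :
    Phi K L u v i = ↑(u ⟨i, hi⟩) := by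
  simp [Phi, Equiv.sumCompl_symm_apply_of_pos (p := (· ∈ K)) hi]

lemma Phi_apply_not_mem (K L : Finset (Fin n)) (u : {x // x ∈ K} ≃ {x // x ∈ L})
    (v : {x // x ∈ Kᶜ} ≃ {x // x ∈ Lᶜ}) {i : Fin n} (hi : ¬ i ∈ K) :
    Phi K L u v i = ↑(v ⟨i, Finset.mem_compl.mpr hi⟩) := by
  simp [Phi, cEquiv, Equiv.sumCompl_symm_apply_of_neg (p := (· ∈ K)) hi, Equiv.subtypeEquivRight]
  rfl

lemma card_eq_of_equiv {K L : Finset (Fin n)} (u : {x // x ∈ K} ≃ {x // x ∈ L}) :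
    K.card = L.card := by
  simpa [Fintype.card_coe] using Fintype.card_congr u

lemma Phi_image (K L : Finset (Fin n)) (u : {x // x ∈ K} ≃ {x // x ∈ L})
    (v : {x // x ∈ Kᶜ} ≃ {x // x ∈ Lᶜ}) : K.image (Phi K L u v) = L := by
  apply Finset.eq_of_subset_of_card_le
  · intro j hj
    obtain ⟨i, hi, rfl⟩ := Finset.mem_image.mp hj
    rw [Phi_apply_mem K L u v hi]
    exact (u ⟨i, hi⟩).2
  · rw [Finset.card_image_of_injective _ (Phi K L u v).injective, card_eq_of_equiv u]

lemma Phi_inj {K L : Finset (Fin n)} {u u' : {x // x ∈ K} ≃ {x // x ∈ L}}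
    {v v' : {x // x ∈ Kᶜ} ≃ {x // x ∈ Lᶜ}} (h : Phi K L u v = Phi K L u' v') :
    u = u' ∧ v = v' := by
  constructor
  · refine Equiv.ext fun x => Subtype.coe_injective ?_
    have h1 := Phi_apply_mem K L u v (i := ↑x) x.2
    have h2 := Phi_apply_mem K L u' v' (i := ↑x) x.2
    rw [h] at h1
    exact h1.symm.trans h2
  · refine Equiv.ext fun x => Subtype.coe_injective ?_
    have hx : ¬ (↑x : Fin n) ∈ K := Finset.mem_compl.mp x.2
    have h1 := Phi_apply_not_mem K L u v (i := ↑x) hx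
    have h2 := Phi_apply_not_mem K L u' v' (i := ↑x) hx
    rw [h] at h1
    exact h1.symm.trans h2

lemma mem_iff_of_image {K L : Finset (Fin n)} {σ : Equiv.Perm (Fin n)}
    (hσ : K.image σ = L) : ∀ x, x ∈ K ↔ σ x ∈ L := by
  intro x
  constructor
  · intro hx; rw [← hσ]; exact Finset.mem_image_of_mem σ hx
  · intro hx
    rw [← hσ] at hx
    obtain ⟨y, hy, hyx⟩ := Finset.mem_image.mp hx
    rwa [← σ.injective hyx]

/-- restriction of a permutation mapping K onto L -/
def resK {K L : Finset (Fin n)} (σ : Equiv.Perm (Fin n)) (hσ : K.image σ = L) :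
    {x // x ∈ K} ≃ {x // x ∈ L} :=
  σ.subtypeEquiv (mem_iff_of_image hσ)

def resKc {K L : Finset (Fin n)} (σ : Equiv.Perm (Fin n)) (hσ : K.image σ = L) :
    {x // x ∈ Kᶜ} ≃ {x // x ∈ Lᶜ} :=
  σ.subtypeEquiv (fun x => by
    simp only [Finset.mem_compl]
    exact not_congr (mem_iff_of_image hσ x))

lemma Phi_res {K L : Finset (Fin n)} (σ : Equiv.Perm (Fin n)) (hσ : K.image σ = L) :
    Phi K L (resK σ hσ) (resKc σ hσ) = σ := by
  ext i
  by_cases hi : i ∈ K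
  · rw [Phi_apply_mem K L _ _ hi]; rfl
  · rw [Phi_apply_not_mem K L _ _ hi]; rfl

lemma fiber_sum (K L : Finset (Fin n)) (T : Equiv.Perm (Fin n) → ℝ) :
    ∑ σ ∈ Finset.univ.filter (fun σ : Equiv.Perm (Fin n) => K.image ⇑σ = L), T σ
      = ∑ u : {x // x ∈ K} ≃ {x // x ∈ L}, ∑ v : {x // x ∈ Kᶜ} ≃ {x // x ∈ Lᶜ},
          T (Phi K L u v) := by
  rw [← Finset.sum_product' (s := Finset.univ) (t := Finset.univ)
    (f := fun u v => T (Phi K L u v))]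
  refine Finset.sum_bij' (fun σ hσ => (resK σ (Finset.mem_filter.mp hσ).2,
      resKc σ (Finset.mem_filter.mp hσ).2)) (fun p _ => Phi K L p.1 p.2) ?_ ?_ ?_ ?_ ?_
  · intro σ hσ; exact Finset.mem_product.mpr ⟨Finset.mem_univ _, Finset.mem_univ _⟩
  · intro p _
    exact Finset.mem_filter.mpr ⟨Finset.mem_univ _, Phi_image K L p.1 p.2⟩
  · intro σ hσ
    exact Phi_res σ (Finset.mem_filter.mp hσ).2
  · intro p hp
    have h := Phi_res (Phi K L p.1 p.2) (Phi_image K L p.1 p.2)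
    obtain ⟨h1, h2⟩ := Phi_inj h
    exact Prod.ext h1 h2
  · intro σ hσ
    rw [Phi_res σ (Finset.mem_filter.mp hσ).2]

lemma Phi_mul_eq (K L : Finset (Fin n)) (u u₀ : {x // x ∈ K} ≃ {x // x ∈ L})
    (v v₀ : {x // x ∈ Kᶜ} ≃ {x // x ∈ Lᶜ}) :
    Phi K L u v = Phi K L u v₀ * (Phi K L u₀ v₀)⁻¹ * Phi K L u₀ v := by
  ext i
  simp only [Equiv.Perm.mul_apply]
  by_cases hi : i ∈ K
  · rw [Phi_apply_mem K L u₀ v hi]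
    have h1 : (Phi K L u₀ v₀)⁻¹ ↑(u₀ ⟨i, hi⟩) = i := by
      rw [Equiv.Perm.inv_eq_iff_eq]
      exact (Phi_apply_mem K L u₀ v₀ hi).symm
    rw [h1, Phi_apply_mem K L u v₀ hi, Phi_apply_mem K L u v hi]
  · rw [Phi_apply_not_mem K L u₀ v hi]
    have h1 : (Phi K L u v₀)⁻¹ ↑(v₀ ⟨i, Finset.mem_compl.mpr hi⟩) = i := by
      rw [Equiv.Perm.inv_eq_iff_eq]
      exact (Phi_apply_not_mem K L u v₀ hi).symm
    set w := (v ⟨i, Finset.mem_compl.mpr hi⟩ : {x // x ∈ Lᶜ}) with hw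
    have hmem : ¬ ((v₀.symm w : {x // x ∈ Kᶜ}) : Fin n) ∈ K :=
      Finset.mem_compl.mp (v₀.symm w).2
    have h3 : (Phi K L u₀ v₀)⁻¹ ↑w = ↑(v₀.symm w) := by
      rw [Equiv.Perm.inv_eq_iff_eq]
      rw [Phi_apply_not_mem K L u₀ v₀ hmem]
      calc (↑w : Fin n) = ↑(v₀ (v₀.symm w)) := by rw [Equiv.apply_symm_apply]
        _ = ↑(v₀ ⟨↑(v₀.symm w), Finset.mem_compl.mpr hmem⟩) := by
            congr 1
            try exact Subtype.ext rfl
    rw [h3]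
    rw [Phi_apply_not_mem K L u v₀ hmem, Phi_apply_not_mem K L u v hi]
    have hfin : v ⟨i, Finset.mem_compl.mpr hi⟩
        = v₀ ⟨↑(v₀.symm w), Finset.mem_compl.mpr hmem⟩ := by
      have heq : (⟨↑(v₀.symm w), Finset.mem_compl.mpr hmem⟩ : {x // x ∈ Kᶜ}) = v₀.symm w :=
        Subtype.ext rfl
      rw [heq, Equiv.apply_symm_apply]
    exact congrArg (fun z : {x // x ∈ Lᶜ} => ((z : Fin n) : ℕ)) hfin

lemma sign_Phi_eq (K L : Finset (Fin n)) (u u₀ : {x // x ∈ K} ≃ {x // x ∈ L})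
    (v v₀ : {x // x ∈ Kᶜ} ≃ {x // x ∈ Lᶜ}) :
    Equiv.Perm.sign (Phi K L u v)
      = Equiv.Perm.sign (Phi K L u₀ v₀) * Equiv.Perm.sign (Phi K L u v₀)
          * Equiv.Perm.sign (Phi K L u₀ v) := by
  rw [Phi_mul_eq K L u u₀ v v₀, _root_.map_mul, _root_.map_mul, map_inv]
  have hinv : (Equiv.Perm.sign (Phi K L u₀ v₀))⁻¹ = Equiv.Perm.sign (Phi K L u₀ v₀) := by
    generalize Equiv.Perm.sign (Phi K L u₀ v₀) = z
    rcases Int.units_eq_one_or z with h | h <;> rw [h] <;> rfl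
  rw [hinv, mul_comm (Equiv.Perm.sign (Phi K L u v₀)) (Equiv.Perm.sign (Phi K L u₀ v₀))]

/-- base-point equivalence between two finsets of equal cardinality -/
noncomputable def baseEquiv {K L : Finset (Fin n)} (h : K.card = L.card) :
    {x // x ∈ K} ≃ {x // x ∈ L} :=
  Fintype.equivOfCardEq (by simpa [Fintype.card_coe] using h)

noncomputable def fAux (K L : Finset (Fin n)) (X : Matrix (Fin n) (Fin n) ℝ) : ℝ :=
  if h : Kᶜ.card = Lᶜ.card then
    ∑ u : {x // x ∈ K} ≃ {x // x ∈ L},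
      ((Equiv.Perm.sign (Phi K L u (baseEquiv h)) : ℤ) : ℝ) * ∏ i : {x // x ∈ K}, X ↑(u i) ↑i
  else 0

noncomputable def gAux (K L : Finset (Fin n)) (Y : Matrix (Fin n) (Fin n) ℝ) : ℝ :=
  if h1 : K.card = L.card then
    if h2 : Kᶜ.card = Lᶜ.card then
      ((Equiv.Perm.sign (Phi K L (baseEquiv h1) (baseEquiv h2)) : ℤ) : ℝ) *
        ∑ v : {x // x ∈ Kᶜ} ≃ {x // x ∈ Lᶜ},
          ((Equiv.Perm.sign (Phi K L (baseEquiv h1) v) : ℤ) : ℝ) *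
            ∏ i : {x // x ∈ Kᶜ}, Y ↑(v i) ↑i
    else 0
  else 0

theorem det_add_eq (X Y : Matrix (Fin n) (Fin n) ℝ) :
    (X + Y).det = ∑ K : Finset (Fin n), ∑ L : Finset (Fin n), fAux K L X * gAux K L Y := by
  rw [Matrix.det_apply]
  have step1 : ∀ σ : Equiv.Perm (Fin n), (Equiv.Perm.sign σ) • ∏ i, (X + Y) (σ i) i
      = ∑ K : Finset (Fin n),
          (Equiv.Perm.sign σ) • ((∏ i ∈ K, X (σ i) i) * ∏ i ∈ Kᶜ, Y (σ i) i) := by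
    intro σ
    rw [← Finset.smul_sum]
    congr 1
    simp only [Matrix.add_apply]
    exact Fintype.prod_add (fun i => X (σ i) i) (fun i => Y (σ i) i)
  rw [Finset.sum_congr rfl fun σ _ => step1 σ]
  rw [Finset.sum_comm]
  refine Finset.sum_congr rfl fun K _ => ?_
  rw [← Finset.sum_fiberwise Finset.univ (fun σ : Equiv.Perm (Fin n) => K.image ⇑σ)
    (fun σ => (Equiv.Perm.sign σ) • ((∏ i ∈ K, X (σ i) i) * ∏ i ∈ Kᶜ, Y (σ i) i))]
  refine Finset.sum_congr rfl fun L _ => ?_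
  rw [fiber_sum]
  by_cases h1 : K.card = L.card
  · have h2 : Kᶜ.card = Lᶜ.card := by
      rw [Finset.card_compl, Finset.card_compl, h1]
    rw [gAux, fAux, dif_pos h2, dif_pos h1, dif_pos h2]
    set u₀ := baseEquiv h1
    set v₀ := baseEquiv h2
    have key : ∀ (u : {x // x ∈ K} ≃ {x // x ∈ L}) (v : {x // x ∈ Kᶜ} ≃ {x // x ∈ Lᶜ}),
        (Equiv.Perm.sign (Phi K L u v)) •
            ((∏ i ∈ K, X (Phi K L u v i) i) * ∏ i ∈ Kᶜ, Y (Phi K L u v i) i)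
          = (((Equiv.Perm.sign (Phi K L u v₀) : ℤ) : ℝ) * ∏ i : {x // x ∈ K}, X ↑(u i) ↑i) *
            (((Equiv.Perm.sign (Phi K L u₀ v₀) : ℤ) : ℝ) *
              (((Equiv.Perm.sign (Phi K L u₀ v) : ℤ) : ℝ) * ∏ i : {x // x ∈ Kᶜ}, Y ↑(v i) ↑i)) := by
      intro u v
      have hX : ∏ i ∈ K, X (Phi K L u v i) i = ∏ i : {x // x ∈ K}, X ↑(u i) ↑i := by
        rw [← Finset.prod_coe_sort K (fun j => X (Phi K L u v j) j)]
        exact Finset.prod_congr rfl fun i _ => by rw [Phi_apply_mem K L u v i.2]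
      have hY : ∏ i ∈ Kᶜ, Y (Phi K L u v i) i = ∏ i : {x // x ∈ Kᶜ}, Y ↑(v i) ↑i := by
        rw [← Finset.prod_coe_sort Kᶜ (fun j => Y (Phi K L u v j) j)]
        refine Finset.prod_congr rfl fun i _ => ?_
        rw [Phi_apply_not_mem K L u v (Finset.mem_compl.mp i.2)]
        all_goals congr 2
        all_goals try exact Subtype.ext rfl
      rw [hX, hY, sign_Phi_eq K L u u₀ v v₀]
      rw [Units.smul_def]
      push_cast
      rw [zsmul_eq_mul]
      push_cast
      ring
    rw [Finset.sum_congr rfl fun u _ => Finset.sum_congr rfl fun v _ => key u v]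
    simp only [← Finset.mul_sum]
    rw [← Finset.sum_mul]
  · rw [gAux, dif_neg h1, mul_zero]
    have : IsEmpty ({x // x ∈ K} ≃ {x // x ∈ L}) := by
      refine ⟨fun u => h1 (card_eq_of_equiv u)⟩
    rw [Finset.univ_eq_empty, Finset.sum_empty]

theorem rank_det_add_le {N : ℕ} (X Y : Fin N → Matrix (Fin n) (Fin n) ℝ) :
    (Matrix.of fun x y => (X x + Y y).det : Matrix (Fin N) (Fin N) ℝ).rank ≤ 4 ^ n := by
  classical
  set F : Matrix (Fin N) (Finset (Fin n) × Finset (Fin n)) ℝ :=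
    Matrix.of fun x p => fAux p.1 p.2 (X x) with hF
  set G : Matrix (Finset (Fin n) × Finset (Fin n)) (Fin N) ℝ :=
    Matrix.of fun p y => gAux p.1 p.2 (Y y) with hG
  have hfg : (Matrix.of fun x y => (X x + Y y).det : Matrix (Fin N) (Fin N) ℝ) = F * G := by
    ext x y
    rw [Matrix.mul_apply, Matrix.of_apply, det_add_eq]
    rw [← Finset.univ_product_univ, Finset.sum_product]
    rfl
  rw [hfg]
  refine le_trans (Matrix.rank_mul_le_left F G) (le_trans (Matrix.rank_le_card_width F) ?_)
  rw [Fintype.card_prod, Fintype.card_finset, Fintype.card_fin, ← mul_pow]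
  norm_num

theorem exists_left_right_factor {a b r : ℕ} (M : Matrix (Fin a) (Fin b) ℝ)
    (h : r ≤ M.rank) :
    ∃ (R : Matrix (Fin r) (Fin a) ℝ) (S : Matrix (Fin b) (Fin r) ℝ), R * M * S = 1 := by
  have h' : r ≤ Module.finrank ℝ (LinearMap.range M.mulVecLin) := h
  obtain ⟨w, hw⟩ := exists_linearIndependent_of_le_finrank (R := ℝ)
    (M := LinearMap.range M.mulVecLin) h'
  choose v hv using fun i => LinearMap.mem_range.mp (w i).2
  set S : Matrix (Fin b) (Fin r) ℝ := Matrix.of fun j i => v i j with hS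
  have hMS : ∀ c : Fin r → ℝ, (M * S).mulVecLin c = ∑ i, c i • ((w i : Fin a → ℝ)) := by
    intro c
    rw [Matrix.mulVecLin_mul, LinearMap.comp_apply]
    have hSc : S.mulVecLin c = ∑ i, c i • v i := by
      ext j
      simp [Matrix.mulVecLin_apply, Matrix.mulVec, dotProduct, hS, Finset.sum_apply,
        mul_comm]
    rw [hSc, map_sum]
    refine Finset.sum_congr rfl fun i _ => ?_
    rw [_root_.map_smul, hv i]
  have hker : LinearMap.ker (M * S).mulVecLin = ⊥ := by
    rw [LinearMap.ker_eq_bot']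
    intro c hc
    have hli : LinearIndependent ℝ (fun i => ((w i : Fin a → ℝ))) :=
      hw.map' (Submodule.subtype _) (Submodule.ker_subtype _)
    have hz := Fintype.linearIndependent_iff.mp hli c (by rw [← hMS]; exact hc)
    funext i
    exact hz i
  have hker' : LinearMap.ker (Matrix.toLin' (M * S)) = ⊥ := by
    rw [Matrix.toLin'_apply']
    exact hker
  obtain ⟨g, hg⟩ := LinearMap.exists_leftInverse_of_injective _ hker'
  refine ⟨LinearMap.toMatrix' g, S, ?_⟩
  rw [Matrix.mul_assoc]
  have hcomp : (LinearMap.toMatrix' g) * (M * S)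
      = LinearMap.toMatrix' (g ∘ₗ Matrix.toLin' (M * S)) := by
    rw [LinearMap.toMatrix'_comp, LinearMap.toMatrix'_toLin']
  rw [hcomp, hg, LinearMap.toMatrix'_id]

theorem exists_good_RS {N a b r : ℕ} (M : Fin N × Fin N → Matrix (Fin a) (Fin b) ℝ) :
    ∃ (R : Matrix (Fin r) (Fin a) ℝ) (S : Matrix (Fin b) (Fin r) ℝ),
      ∀ p : Fin N × Fin N, r ≤ (M p).rank → (R * M p * S).det ≠ 0 := by
  classical
  suffices h : ∀ T : Finset (Fin N × Fin N), ∃ (R : Matrix (Fin r) (Fin a) ℝ)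
      (S : Matrix (Fin b) (Fin r) ℝ),
      ∀ p ∈ T, r ≤ (M p).rank → (R * M p * S).det ≠ 0 by
    obtain ⟨R, S, hRS⟩ := h Finset.univ
    exact ⟨R, S, fun p => hRS p (Finset.mem_univ p)⟩
  intro T
  induction T using Finset.induction_on with
  | empty => exact ⟨0, 0, fun p hp => absurd hp (Finset.notMem_empty p)⟩
  | @insert q T hq ih =>
    obtain ⟨R₁, S₁, h₁⟩ := ih
    by_cases hrank : r ≤ (M q).rank
    · obtain ⟨R₂, S₂, h₂⟩ := exists_left_right_factor (M q) hrank
      set Rp : Matrix (Fin r) (Fin a) (Polynomial ℝ) :=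
        R₁.map Polynomial.C + (Polynomial.X : Polynomial ℝ) • (R₂ - R₁).map Polynomial.C with hRp
      set Sp : Matrix (Fin b) (Fin r) (Polynomial ℝ) :=
        S₁.map Polynomial.C + (Polynomial.X : Polynomial ℝ) • (S₂ - S₁).map Polynomial.C with hSp
      set Pq : (Fin N × Fin N) → Polynomial ℝ :=
        fun p => (Rp * (M p).map Polynomial.C * Sp).det with hPq
      have heval : ∀ (p) (t : ℝ), (Pq p).eval t
          = ((R₁ + t • (R₂ - R₁)) * M p * (S₁ + t • (S₂ - S₁))).det := by
        intro p t
        have e1 : (Pq p).eval t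
            = ((Rp * (M p).map Polynomial.C * Sp).map (Polynomial.evalRingHom t)).det :=
          RingHom.map_det (Polynomial.evalRingHom t) _
        rw [e1, Matrix.map_mul, Matrix.map_mul]
        have hR : Rp.map ⇑(Polynomial.evalRingHom t) = R₁ + t • (R₂ - R₁) := by
          ext i j
          simp [hRp, Matrix.map_apply, Matrix.add_apply, Matrix.smul_apply,
            Matrix.sub_apply, smul_eq_mul]
        have hM : ((M p).map Polynomial.C).map ⇑(Polynomial.evalRingHom t) = M p := by
          ext i j
          simp [Matrix.map_apply]
        have hS : Sp.map ⇑(Polynomial.evalRingHom t) = S₁ + t • (S₂ - S₁) := by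
          ext i j
          simp [hSp, Matrix.map_apply, Matrix.add_apply, Matrix.smul_apply,
            Matrix.sub_apply, smul_eq_mul]
        rw [hR, hM, hS]
      set T' := (insert q T).filter (fun p => r ≤ (M p).rank) with hT'
      have hPnz : ∀ p ∈ T', Pq p ≠ 0 := by
        intro p hp
        obtain ⟨hpmem, hprank⟩ := Finset.mem_filter.mp hp
        rcases Finset.mem_insert.mp hpmem with hcase | hcase
        · subst hcase
          intro h0
          have he := heval p 1
          rw [h0] at he
          have hone : R₁ + (1 : ℝ) • (R₂ - R₁) = R₂ := by
            rw [one_smul]; abel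
          have hone' : S₁ + (1 : ℝ) • (S₂ - S₁) = S₂ := by
            rw [one_smul]; abel
          rw [hone, hone', h₂] at he
          simp at he
        · intro h0
          have he := heval p 0
          rw [h0] at he
          have hzero : R₁ + (0 : ℝ) • (R₂ - R₁) = R₁ := by
            rw [zero_smul, add_zero]
          have hzero' : S₁ + (0 : ℝ) • (S₂ - S₁) = S₁ := by
            rw [zero_smul, add_zero]
          rw [hzero, hzero'] at he
          simp only [Polynomial.eval_zero] at he
          exact h₁ p hcase hprank he.symm
      have hprod : (∏ p ∈ T', Pq p) ≠ 0 := Finset.prod_ne_zero_iff.mpr hPnz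
      have hex : ¬ ∀ t : ℝ, (∏ p ∈ T', Pq p).eval t = 0 := by
        intro hall
        exact hprod (Polynomial.funext fun t => by rw [hall t]; simp)
      push_neg at hex
      obtain ⟨t, ht⟩ := hex
      refine ⟨R₁ + t • (R₂ - R₁), S₁ + t • (S₂ - S₁), ?_⟩
      intro p hp hprank
      have hp' : p ∈ T' := Finset.mem_filter.mpr ⟨hp, hprank⟩
      have hnz : (Pq p).eval t ≠ 0 := by
        intro h0
        apply ht
        rw [Polynomial.eval_prod]
        exact Finset.prod_eq_zero hp' h0
      rwa [heval] at hnz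
    · refine ⟨R₁, S₁, ?_⟩
      intro p hp hpr
      rcases Finset.mem_insert.mp hp with hcase | hcase
      · exact absurd (hcase ▸ hpr) hrank
      · exact h₁ p hcase hpr

end Stmt10Aux

theorem stmt10 (N a b r : ℕ) (A B : Fin N → Matrix (Fin a) (Fin b) ℝ)
    (P : Matrix (Fin N) (Fin N) Bool)
    (hP : ∀ x y, P x y = true ↔ r ≤ (A x + B y).rank) :
    suprank P ≤ 4 ^ r := by
  classical
  obtain ⟨R, S, hRS⟩ := Stmt10Aux.exists_good_RS (r := r)
    (fun p : Fin N × Fin N => A p.1 + B p.2)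
  set C : Matrix (Fin N) (Fin N) ℝ :=
    Matrix.of fun x y => ((R * A x * S) + (R * B y * S)).det with hC
  have hCval : ∀ x y, C x y = (R * (A x + B y) * S).det := by
    intro x y
    simp only [hC, Matrix.of_apply]
    rw [Matrix.mul_add, Matrix.add_mul]
  have hdet_rank : ∀ x y, (R * (A x + B y) * S).det ≠ 0 → r ≤ (A x + B y).rank := by
    intro x y hdet
    have hunit : IsUnit (R * (A x + B y) * S) :=
      (Matrix.isUnit_iff_isUnit_det _).mpr (isUnit_iff_ne_zero.mpr hdet)
    have h1 : (R * (A x + B y) * S).rank = r := by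
      rw [Matrix.rank_of_isUnit _ hunit, Fintype.card_fin]
    have h2 : (R * (A x + B y) * S).rank ≤ (A x + B y).rank :=
      le_trans (Matrix.rank_mul_le_left _ S)
        (Matrix.rank_mul_le_right R (A x + B y))
    rw [h1] at h2
    exact h2
  have hsupp : ∀ x y, C x y = 0 ↔ P x y = false := by
    intro x y
    rw [hCval]
    constructor
    · intro h0
      by_contra hne
      have htrue : P x y = true := by
        cases hbx : P x y
        · exact absurd hbx hne
        · rfl
      have hr := (hP x y).mp htrue
      exact hRS (x, y) hr h0
    · intro hfalse
      by_contra hdet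
      have hr := hdet_rank x y hdet
      have := (hP x y).mpr hr
      rw [hfalse] at this
      exact Bool.false_ne_true this
  have hrank : C.rank ≤ 4 ^ r :=
    Stmt10Aux.rank_det_add_le (fun x => R * A x * S) (fun y => R * B y * S)
  have hmem : C.rank ∈ {s : ℕ | ∃ A : Matrix (Fin N) (Fin N) ℝ, A.rank = s ∧
      ∀ i j, A i j = 0 ↔ P i j = false} := ⟨C, rfl, hsupp⟩
  exact le_trans (Nat.sInf_le hmem) hrank
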